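/- The group GL_6(F_2) of invertible 6×6 matrices over the field with 2 elements contains no subgroup isomorphic to PSL_2(F_8) × C_2, the direct product of PSL_2(F_8) = SL_2(F_8) with a cyclic group of order 2. -/

import Mathlib

open Polynomial

section Aux

/-- `2 = 0` in `(ZMod 2)[X]`. -/
private lemma two_eq_zero_poly : (2 : (ZMod 2)[X]) = 0 := by
  have := CharP.cast_eq_zero (ZMod 2)[X] 2
  exact_mod_cast this

/-- There is an element `a` of `F₈` with `a ^ 3 = a + 1`. -/
private lemma exists_cubic_root : ∃ a : GaloisField 2 3, a ^ 3 = a + 1 := by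
  have hdvd : ((X : (ZMod 2)[X]) ^ 3 + X + 1) ∣ (X ^ 2 ^ 3 - X) := by
    refine ⟨X ^ 5 + X ^ 3 + X ^ 2 + X, ?_⟩
    norm_num
    linear_combination (-(X : (ZMod 2)[X]) ^ 6 - X ^ 5 - X ^ 4 - X ^ 3 - X ^ 2 - X) *
      two_eq_zero_poly
  have hne : ((X : (ZMod 2)[X]) ^ 2 ^ 3 - X) ≠ 0 :=
    FiniteField.X_pow_card_pow_sub_X_ne_zero _ (by norm_num) (by norm_num)
  have hsplits : Splits (((X : (ZMod 2)[X]) ^ 2 ^ 3 - X).map (algebraMap (ZMod 2) (GaloisField 2 3))) :=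
    SplittingField.splits _
  have hq : Splits (((X : (ZMod 2)[X]) ^ 3 + X + 1).map (algebraMap (ZMod 2) (GaloisField 2 3))) :=
    Splits.of_dvd hsplits (Polynomial.map_ne_zero hne) (Polynomial.map_dvd _ hdvd)
  have hdeg : ((X : (ZMod 2)[X]) ^ 3 + X + 1).degree ≠ 0 := by
    have h3 : ((X : (ZMod 2)[X]) ^ 3 + X + 1).natDegree = 3 := by compute_degree!
    exact degree_ne_of_natDegree_ne (by rw [h3]; norm_num)
  obtain ⟨x, hx⟩ := Splits.exists_eval_eq_zero hq (by rw [degree_map]; exact hdeg)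
  simp only [eval_map, eval₂_add, eval₂_pow, eval₂_X, eval₂_one] at hx
  have h2 : (2 : GaloisField 2 3) = 0 := by
    have := CharP.cast_eq_zero (GaloisField 2 3) 2
    exact_mod_cast this
  exact ⟨x, by linear_combination hx - (x + 1) * h2⟩

/-- `X^6 + X^3 + 1` (the 9th cyclotomic polynomial) is irreducible over `F₂`. -/
private lemma phi_irreducible : Irreducible ((X : (ZMod 2)[X]) ^ 6 + X ^ 3 + 1) := by
  set Φ : (ZMod 2)[X] := X ^ 6 + X ^ 3 + 1 with hΦdef
  have hΦmonic : Φ.Monic := by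
    have h := Polynomial.monic_X_pow_add (p := (X : (ZMod 2)[X]) ^ 3 + 1) (n := 6)
      (lt_of_le_of_lt (by compute_degree!) (by norm_num : (3 : WithBot ℕ) < 6))
    simpa [hΦdef, add_assoc] using h
  have hΦdeg : Φ.natDegree = 6 := by rw [hΦdef]; compute_degree!
  have hΦne : Φ ≠ 0 := hΦmonic.ne_zero
  -- no irreducible factor of degree ≤ 3
  have key : ∀ q : (ZMod 2)[X], Irreducible q → q ∣ Φ → 3 < q.natDegree := by
    intro q hq hqd
    by_contra hle
    push_neg at hle
    have hq1 : 1 ≤ q.natDegree := hq.natDegree_pos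
    haveI : Fact (Irreducible q) := ⟨hq⟩
    set K := AdjoinRoot q
    set x : K := AdjoinRoot.root q
    have hxq : Polynomial.aeval x q = 0 := by
      rw [AdjoinRoot.aeval_eq, AdjoinRoot.mk_self]
    have hxΦ : Polynomial.aeval x Φ = 0 := by
      obtain ⟨c, hc⟩ := hqd
      rw [hc, map_mul, hxq, zero_mul]
    have hx : x ^ 6 + x ^ 3 + 1 = 0 := by
      simpa [hΦdef] using hxΦ
    -- K is a finite field of cardinality 2 ^ q.natDegree
    haveI : Module.Finite (ZMod 2) K :=
      Module.Finite.of_basis (AdjoinRoot.powerBasis (f := q) hq.ne_zero).basis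
    haveI : Finite K := Module.finite_of_finite (ZMod 2)
    haveI : Fintype K := Fintype.ofFinite K
    have hcard : Fintype.card K = 2 ^ q.natDegree := by
      rw [Module.card_eq_pow_finrank (K := ZMod 2) (V := K), ZMod.card,
        (AdjoinRoot.powerBasis (f := q) hq.ne_zero).finrank, AdjoinRoot.powerBasis_dim]
    have hx0 : x ≠ 0 := by
      intro h
      rw [h] at hx
      simp at hx
    have hxcard : x ^ 2 ^ q.natDegree = x := by
      rw [← hcard]; exact FiniteField.pow_card x
    have hxu : x ^ (2 ^ q.natDegree - 1) = 1 := by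
      have h1 : 1 ≤ 2 ^ q.natDegree := Nat.one_le_two_pow
      have : x ^ (2 ^ q.natDegree - 1) * x = 1 * x := by
        rw [one_mul, ← pow_succ, Nat.sub_add_cancel h1, hxcard]
      exact mul_right_cancel₀ hx0 this
    have h9 : x ^ 9 = 1 := by linear_combination (x ^ 3 - 1) * hx
    have hd9 : orderOf x ∣ 9 := orderOf_dvd_of_pow_eq_one h9
    have hdu : orderOf x ∣ 2 ^ q.natDegree - 1 := orderOf_dvd_of_pow_eq_one hxu
    -- in all cases `x ^ 3 = 1`
    have hx3 : x ^ 3 = 1 := by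
      rw [← orderOf_dvd_iff_pow_eq_one]
      interval_cases h : q.natDegree
      · norm_num at hdu
        simp [hdu]
      · norm_num at hdu
        exact hdu
      · norm_num at hdu
        have := Nat.dvd_gcd hdu hd9
        norm_num at this
        simp [this]
    have h2 : (2 : K) = 0 := by
      haveI : CharP K 2 := charP_of_injective_algebraMap (algebraMap (ZMod 2) K).injective 2
      have := CharP.cast_eq_zero K 2
      exact_mod_cast this
    have : (1 : K) = 0 := by linear_combination -hx + (x ^ 3 + 2) * hx3 + 2 * h2
    exact one_ne_zero this
  by_contra hred
  obtain ⟨p, hp, hpd⟩ := WfDvdMonoid.exists_irreducible_factor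
    (Polynomial.not_isUnit_of_natDegree_pos Φ (by omega)) hΦne
  obtain ⟨g, hg⟩ := hpd
  have hp0 : p ≠ 0 := hp.ne_zero
  have hg0 : g ≠ 0 := by rintro rfl; rw [mul_zero] at hg; exact hΦne hg
  have hsum : p.natDegree + g.natDegree = 6 := by
    rw [← natDegree_mul hp0 hg0, ← hg, hΦdeg]
  by_cases hple : p.natDegree ≤ 3
  · exact absurd (key p hp ⟨g, hg⟩) (by omega)
  · have hgdeg : g.natDegree ≤ 2 := by omega
    have hgle : 1 ≤ g.natDegree := by
      by_contra h
      push_neg at h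
      have h0 : g.natDegree = 0 := by omega
      have hgC := eq_C_of_natDegree_eq_zero h0
      have hc : g.coeff 0 = 1 := by
        have hnz : g.coeff 0 ≠ 0 := by
          intro hz; rw [hgC, hz, map_zero] at hg0; exact hg0 rfl
        revert hnz; generalize g.coeff 0 = c; revert c; decide
      have hΦp : Φ = p := by rw [hg, hgC, hc, map_one, mul_one]
      exact hred (hΦp ▸ hp)
    obtain ⟨r, hr, hrd⟩ := WfDvdMonoid.exists_irreducible_factor
      (Polynomial.not_isUnit_of_natDegree_pos g (by omega)) hg0
    have hrΦ : r ∣ Φ := hrd.trans ⟨p, by rw [hg]; ring⟩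
    have h1 : 3 < r.natDegree := key r hr hrΦ
    have h2 : r.natDegree ≤ g.natDegree := natDegree_le_of_dvd hrd hg0
    omega

/-- If a 6×6 matrix over `F₂` satisfies `A ^ 18 = 1`, then `A ^ 9 = 1` or `A ^ 6 = 1`. -/
private lemma pow18 (A : Matrix (Fin 6) (Fin 6) (ZMod 2)) (hA : A ^ 18 = 1) :
    A ^ 9 = 1 ∨ A ^ 6 = 1 := by
  set Φ : (ZMod 2)[X] := X ^ 6 + X ^ 3 + 1 with hΦdef
  have hΦdeg : Φ.natDegree = 6 := by rw [hΦdef]; compute_degree!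
  have hΦirr : Irreducible Φ := phi_irreducible
  have hΦne : Φ ≠ 0 := hΦirr.ne_zero
  have hint : IsIntegral (ZMod 2) A := Matrix.isIntegral A
  set m := minpoly (ZMod 2) A with hmdef
  have hm0 : m ≠ 0 := minpoly.ne_zero hint
  have hm1 : m ∣ (X : (ZMod 2)[X]) ^ 18 - 1 := by
    apply minpoly.dvd
    rw [map_sub, map_pow, aeval_X, map_one, hA, sub_self]
  have hmc : m ∣ A.charpoly := Matrix.minpoly_dvd_charpoly A
  have hcd : A.charpoly.natDegree = 6 := by
    rw [Matrix.charpoly_natDegree_eq_dim, Fintype.card_fin]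
  have hmd : m.natDegree ≤ 6 := hcd ▸ natDegree_le_of_dvd hmc A.charpoly_monic.ne_zero
  have hfact : (X : (ZMod 2)[X]) ^ 18 - 1 = (X ^ 6 - 1) * Φ ^ 2 := by
    rw [hΦdef]
    linear_combination (-(X : (ZMod 2)[X]) ^ 15 - X ^ 12 + X ^ 6 + X ^ 3) * two_eq_zero_poly
  by_cases hdvd : Φ ∣ m
  · left
    obtain ⟨c, hc⟩ := hdvd
    have hc0 : c ≠ 0 := by rintro rfl; rw [mul_zero] at hc; exact hm0 hc
    have hdeg : m.natDegree = Φ.natDegree + c.natDegree := by rw [hc, natDegree_mul hΦne hc0]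
    have hcd0 : c.natDegree = 0 := by omega
    have hgC := eq_C_of_natDegree_eq_zero hcd0
    have hcoeff : c.coeff 0 = 1 := by
      have hnz : c.coeff 0 ≠ 0 := by
        intro hz; rw [hgC, hz, map_zero] at hc0; exact hc0 rfl
      revert hnz; generalize c.coeff 0 = c; revert c; decide
    have hmΦ : m = Φ := by rw [hc, hgC, hcoeff, map_one, mul_one]
    have haΦ : Polynomial.aeval A Φ = 0 := by rw [← hmΦ]; exact minpoly.aeval _ _
    have h9 : (X : (ZMod 2)[X]) ^ 9 - 1 = (X ^ 3 - 1) * Φ := by rw [hΦdef]; ring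
    have : Polynomial.aeval A ((X : (ZMod 2)[X]) ^ 9 - 1) = 0 := by
      rw [h9, map_mul, haΦ, mul_zero]
    rw [map_sub, map_pow, aeval_X, map_one, sub_eq_zero] at this
    exact this
  · right
    have hcop : IsCoprime Φ m := (hΦirr.coprime_iff_not_dvd).mpr hdvd
    have hm6 : m ∣ (X : (ZMod 2)[X]) ^ 6 - 1 := by
      refine (hcop.symm.pow_right (n := 2)).dvd_of_dvd_mul_right ?_
      rw [← hfact]; exact hm1
    obtain ⟨c, hc⟩ := hm6
    have : Polynomial.aeval A ((X : (ZMod 2)[X]) ^ 6 - 1) = 0 := by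
      rw [hc, map_mul, minpoly.aeval, zero_mul]
    rw [map_sub, map_pow, aeval_X, map_one, sub_eq_zero] at this
    exact this

/-- `SL₂(F₈)` has an element of order 9. -/
private lemma exists_order_nine :
    ∃ g : Matrix.SpecialLinearGroup (Fin 2) (GaloisField 2 3), orderOf g = 9 := by
  obtain ⟨a, ha⟩ := exists_cubic_root
  have h2 : (2 : GaloisField 2 3) = 0 := by
    have := CharP.cast_eq_zero (GaloisField 2 3) 2
    exact_mod_cast this
  set M : Matrix (Fin 2) (Fin 2) (GaloisField 2 3) := !![0, 1; 1, a] with hMdef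
  have hdet : M.det = 1 := by
    rw [hMdef, Matrix.det_fin_two_of]
    linear_combination -h2
  have hM3 : M ^ 3 = !![a, a ^ 2 + 1; a ^ 2 + 1, a + 1] := by
    rw [pow_succ, pow_two, hMdef, Matrix.mul_fin_two, Matrix.mul_fin_two]
    ext i j
    fin_cases i <;> fin_cases j <;> simp <;>
      first
        | linear_combination ha + a * h2
        | ring
  have hM9 : M ^ 9 = 1 := by
    rw [show (9 : ℕ) = 3 * 3 by norm_num, pow_mul, hM3, pow_succ, pow_two,
      Matrix.mul_fin_two, Matrix.mul_fin_two]
    ext i j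
    fin_cases i <;> fin_cases j <;>
      simp [Matrix.one_apply] <;>
      first
        | linear_combination (3 * a ^ 2 + a + 10) * ha + (3 * a ^ 2 + 7 * a + 5) * h2
        | linear_combination (a ^ 3 + 7 * a + 4) * ha + (7 * a ^ 2 + 7 * a + 3) * h2
        | linear_combination (3 * a ^ 2 + 2 * a + 10) * ha + (6 * a ^ 2 + 9 * a + 6) * h2
  have hM3ne : M ^ 3 ≠ 1 := by
    rw [hM3]
    intro h
    have h01 := (Matrix.ext_iff.2 h) 0 1
    simp [Matrix.one_apply] at h01
    have : (1 : GaloisField 2 3) = 0 := by linear_combination a * h01 - ha - a * h2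
    exact one_ne_zero this
  set g0 : Matrix.SpecialLinearGroup (Fin 2) (GaloisField 2 3) := ⟨M, hdet⟩ with hg0def
  refine ⟨g0, ?_⟩
  haveI : Fact (Nat.Prime 3) := ⟨by norm_num⟩
  have h := orderOf_eq_prime_pow (x := g0) (n := 1) (p := 3) ?_ ?_
  · rw [h]; norm_num
  · intro hcon
    apply hM3ne
    have := congrArg (Subtype.val) hcon
    rw [Matrix.SpecialLinearGroup.coe_pow] at this
    simpa using this
  · apply Subtype.ext
    rw [Matrix.SpecialLinearGroup.coe_pow]
    simpa using hM9

end Aux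

/-- `GL₆(F₂)` contains no subgroup isomorphic to `PSL₂(F₈) × C₂`. -/
theorem stmt_17 (H : Subgroup (Matrix.GeneralLinearGroup (Fin 6) (ZMod 2))) :
    ¬ Nonempty (H ≃*
      (Matrix.SpecialLinearGroup (Fin 2) (GaloisField 2 3) × Multiplicative (ZMod 2))) := by
  rintro ⟨e⟩
  obtain ⟨g, hg⟩ := exists_order_nine
  set t : Multiplicative (ZMod 2) := Multiplicative.ofAdd 1 with htdef
  have ht : orderOf t = 2 := by
    rw [htdef, orderOf_ofAdd_eq_addOrderOf, ZMod.addOrderOf_one]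
  have hx : orderOf (g, t) = 18 := by
    rw [Prod.orderOf, hg, ht]
    decide
  set y : H := e.symm (g, t) with hydef
  have hy : orderOf y = 18 := by
    rw [hydef, ← hx]
    exact orderOf_injective e.symm.toMonoidHom e.symm.injective (g, t)
  set z : Matrix.GeneralLinearGroup (Fin 6) (ZMod 2) := (y : Matrix.GeneralLinearGroup (Fin 6) (ZMod 2)) with hzdef
  have hz : orderOf z = 18 := by rw [hzdef, Subgroup.orderOf_coe, hy]
  set A : Matrix (Fin 6) (Fin 6) (ZMod 2) := (z : Matrix (Fin 6) (Fin 6) (ZMod 2)) with hAdef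
  have hAord : orderOf A = 18 := by rw [hAdef, orderOf_units, hz]
  have hA18 : A ^ 18 = 1 := by rw [← hAord]; exact pow_orderOf_eq_one A
  rcases pow18 A hA18 with h | h
  · have : (18 : ℕ) ∣ 9 := hAord ▸ orderOf_dvd_of_pow_eq_one h
    norm_num at this
  · have : (18 : ℕ) ∣ 6 := hAord ▸ orderOf_dvd_of_pow_eq_one h
    norm_num at this
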